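/- Let M be the n-dimensional Riemannian product of m round unit spheres, each of dimension at least 1, so that the dimensions sum to n. Then M has positive (p,n)-intermediate scalar curvature if and only if p < n - m. -/

import Mathlib

open Module Finset

/-- The curvature form `R(v,w,w,v)` of the Riemannian product of `m` round unit spheres,
whose tangent coordinates `Fin n` are partitioned into blocks by `c : Fin n → Fin m`
(block `a` being the tangent space of the `a`-th sphere factor): the sum over the factors
of the squared wedge of the projections of `v` and `w` to that factor.  For orthonormal
`v, w` this is the sectional curvature of their span. -/
noncomputable def sphereProdK {n m : ℕ} (c : Fin n → Fin m)
    (v w : EuclideanSpace ℝ (Fin n)) : ℝ :=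
  ∑ a : Fin m,
    ((∑ i ∈ univ.filter (fun i => c i = a), (v i) ^ 2) *
        (∑ i ∈ univ.filter (fun i => c i = a), (w i) ^ 2) -
      (∑ i ∈ univ.filter (fun i => c i = a), v i * w i) ^ 2)

/-- `∑_{i ≠ j} K (e i) (e j)`: the `(p,n)`-intermediate scalar curvature when `e`
is an orthonormal basis of the orthogonal complement of a `p`-plane. -/
noncomputable def sSum {n k : ℕ}
    (K : EuclideanSpace ℝ (Fin n) → EuclideanSpace ℝ (Fin n) → ℝ)
    (e : Fin k → EuclideanSpace ℝ (Fin n)) : ℝ :=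
  ∑ i : Fin k, ∑ j : Fin k, if i ≠ j then K (e i) (e j) else 0

open RealInnerProductSpace in
lemma aux_mem_span {F : Type*} [NormedAddCommGroup F] [InnerProductSpace ℝ F] {u v : F}
    (hu : u ≠ 0) (h : (⟪u, v⟫)^2 = ⟪u, u⟫ * ⟪v, v⟫) : v ∈ Submodule.span ℝ {u} := by
  have huu : (⟪u, u⟫ : ℝ) ≠ 0 := fun h0 => hu ((inner_self_eq_zero (𝕜 := ℝ)).mp h0)
  have hw : (⟪u, u⟫ : ℝ) • v - (⟪u, v⟫ : ℝ) • u = 0 := by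
    rw [← (inner_self_eq_zero (𝕜 := ℝ))]
    have hexp : (⟪(⟪u, u⟫ : ℝ) • v - (⟪u, v⟫ : ℝ) • u, (⟪u, u⟫ : ℝ) • v - (⟪u, v⟫ : ℝ) • u⟫ : ℝ)
        = ⟪u, u⟫ ^ 2 * ⟪v, v⟫ - ⟪u, u⟫ * ⟪u, v⟫ ^ 2 := by
      simp only [inner_sub_left, inner_sub_right, real_inner_smul_left, real_inner_smul_right,
        real_inner_comm u v]
      ring
    rw [hexp]
    linear_combination (-(⟪u, u⟫ : ℝ)) * h
  have h5 : (⟪u, u⟫ : ℝ) • v = (⟪u, v⟫ : ℝ) • u := sub_eq_zero.mp hw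
  refine Submodule.mem_span_singleton.2 ⟨(⟪u, v⟫ : ℝ) / ⟪u, u⟫, ?_⟩
  calc ((⟪u, v⟫ : ℝ) / ⟪u, u⟫) • u = ((⟪u, u⟫ : ℝ)⁻¹ * ⟪u, v⟫) • u := by
        rw [div_eq_inv_mul]
    _ = (⟪u, u⟫ : ℝ)⁻¹ • ((⟪u, v⟫ : ℝ) • u) := by rw [mul_smul]
    _ = (⟪u, u⟫ : ℝ)⁻¹ • ((⟪u, u⟫ : ℝ) • v) := by rw [h5]
    _ = v := by rw [smul_smul, inv_mul_cancel₀ huu, one_smul]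

/-- The `n`-dimensional Riemannian product of `m` round unit spheres (each of dimension
at least one, encoded by the surjective block assignment `c : Fin n → Fin m`) has
positive `(p,n)`-intermediate scalar curvature if and only if `p < n - m`. -/
theorem product_of_spheres_intermediate_curvature (n m p : ℕ) (hp : p ≤ n - 2)
    (c : Fin n → Fin m) (hc : Function.Surjective c) :
    (∀ P : Submodule ℝ (EuclideanSpace ℝ (Fin n)), finrank ℝ P = p →
        ∀ e : Fin (n - p) → EuclideanSpace ℝ (Fin n),
          Orthonormal ℝ e → (∀ i, e i ∈ Pᗮ) → 0 < sSum (sphereProdK c) e) ↔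
      p < n - m := by
  have hmn : m ≤ n := by simpa using Fintype.card_le_of_surjective c hc
  constructor
  · -- if positive curvature for all, then p < n - m : contrapositive, build counterexample
    intro h
    by_contra hk
    push_neg at hk
    have hkm : n - p ≤ m := by omega
    let f : Fin (n - p) → Fin n := fun i => Function.surjInv hc (Fin.castLE hkm i)
    have hcf : ∀ i, c (f i) = Fin.castLE hkm i := fun i => Function.surjInv_eq hc _
    have hfinj : Function.Injective f := by
      intro i j hij
      have h2 := congrArg c hij
      rw [hcf, hcf] at h2
      exact Fin.castLE_injective hkm h2
    let e : Fin (n - p) → EuclideanSpace ℝ (Fin n) := fun i => EuclideanSpace.single (f i) 1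
    have he : Orthonormal ℝ e := EuclideanSpace.orthonormal_single.comp f hfinj
    have hspan : finrank ℝ (Submodule.span ℝ (Set.range e)) = n - p := by
      rw [finrank_span_eq_card he.linearIndependent, Fintype.card_fin]
    have hpn : p ≤ n := by omega
    have hPrank : finrank ℝ ((Submodule.span ℝ (Set.range e))ᗮ) = p := by
      have h3 := Submodule.finrank_add_finrank_orthogonal
        (K := Submodule.span ℝ (Set.range e))
      rw [hspan, finrank_euclideanSpace_fin] at h3
      omega
    have hmem : ∀ i, e i ∈ ((Submodule.span ℝ (Set.range e))ᗮ)ᗮ := fun i =>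
      Submodule.le_orthogonal_orthogonal _ (Submodule.subset_span (Set.mem_range_self i))
    have hpos := h _ hPrank e he hmem
    have hzero : sSum (sphereProdK c) e = 0 := by
      unfold sSum
      apply Finset.sum_eq_zero; intro i _
      apply Finset.sum_eq_zero; intro j _
      by_cases hij : i = j
      · simp [hij]
      · simp only [Ne, hij, not_false_iff, if_true]
        unfold sphereProdK
        apply Finset.sum_eq_zero; intro a _
        have h1 : ∀ l : Fin (n - p), (∑ x ∈ univ.filter (fun x => c x = a), (e l x) ^ 2)
            = if c (f l) = a then 1 else 0 := by
          intro l
          have : ∀ x, (e l x) ^ 2 = if x = f l then (1 : ℝ) else 0 := by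
            intro x
            simp only [e, EuclideanSpace.single_apply]
            by_cases hx : x = f l <;> simp [hx]
          simp only [this]
          rw [Finset.sum_ite_eq' (univ.filter (fun x => c x = a)) (f l) (fun _ => (1 : ℝ))]
          simp
        have h2 : (∑ x ∈ univ.filter (fun x => c x = a), e i x * e j x) = 0 := by
          apply Finset.sum_eq_zero; intro x _
          simp only [e, EuclideanSpace.single_apply]
          by_cases hx : x = f i
          · have hfij : f i ≠ f j := fun hxx => hij (hfinj hxx)
            simp [hx, hfij]
          · simp [hx]
        rw [h1 i, h1 j, h2]
        by_cases hi : c (f i) = a <;> by_cases hj : c (f j) = a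
        · exfalso
          apply hij
          apply Fin.castLE_injective hkm
          rw [← hcf i, ← hcf j, hi, hj]
        all_goals simp [hi, hj]
    rw [hzero] at hpos
    exact lt_irrefl 0 hpos
  · -- the hard direction
    intro hk P hPrank e he hmem
    have hmk : m < n - p := by omega
    classical
    -- projections of e onto the blocks
    set u : Fin m → Fin (n - p) → EuclideanSpace ℝ (Fin n) :=
      fun a i => (WithLp.toLp 2 (fun x => if c x = a then e i x else 0) : EuclideanSpace ℝ (Fin n)) with hu
    have hinner : ∀ (a : Fin m) (i j : Fin (n - p)),
        (inner ℝ (u a i) (u a j) : ℝ) = ∑ x ∈ univ.filter (fun x => c x = a), e i x * e j x := by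
      intro a i j
      simp only [PiLp.inner_apply, RCLike.inner_apply, conj_trivial]
      rw [Finset.sum_filter]
      apply Finset.sum_congr rfl; intro x _
      by_cases hx : c x = a <;> simp [hu, hx, mul_comm]
    have hA : ∀ (a : Fin m) (i : Fin (n - p)),
        (∑ x ∈ univ.filter (fun x => c x = a), (e i x) ^ 2) = (inner ℝ (u a i) (u a i) : ℝ) := by
      intro a i
      rw [hinner]
      apply Finset.sum_congr rfl; intro x _; rw [sq]
    have hterm_nonneg : ∀ (a : Fin m) (i j : Fin (n - p)),
        0 ≤ (inner ℝ (u a i) (u a i) : ℝ) * (inner ℝ (u a j) (u a j) : ℝ)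
          - (inner ℝ (u a i) (u a j) : ℝ) ^ 2 := by
      intro a i j
      have h1 := sum_mul_sq_le_sq_mul_sq (univ.filter (fun x => c x = a))
        (fun x => e i x) (fun x => e j x)
      rw [hA a i, hA a j, ← hinner a i j] at h1
      linarith
    have hsum : sSum (sphereProdK c) e
        = ∑ i : Fin (n - p), ∑ j : Fin (n - p), ∑ a : Fin m,
            ((inner ℝ (u a i) (u a i) : ℝ) * (inner ℝ (u a j) (u a j) : ℝ)
              - (inner ℝ (u a i) (u a j) : ℝ) ^ 2) := by
      unfold sSum sphereProdK
      apply Finset.sum_congr rfl; intro i _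
      apply Finset.sum_congr rfl; intro j _
      by_cases hij : i = j
      · subst hij
        simp only [ne_eq, not_true_eq_false, if_false]
        rw [eq_comm]
        apply Finset.sum_eq_zero; intro a _
        ring
      · simp only [Ne, hij, not_false_iff, if_true]
        apply Finset.sum_congr rfl; intro a _
        rw [hA a i, hA a j, hinner a i j]
    rw [hsum]
    by_cases hex : ∃ (a : Fin m) (i j : Fin (n - p)),
        (inner ℝ (u a i) (u a j) : ℝ) ^ 2 ≠ (inner ℝ (u a i) (u a i) : ℝ) * (inner ℝ (u a j) (u a j) : ℝ)
    · obtain ⟨a0, i0, j0, hne⟩ := hex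
      refine Finset.sum_pos'
        (fun i _ => Finset.sum_nonneg fun j _ => Finset.sum_nonneg fun a _ => hterm_nonneg a i j)
        ⟨i0, Finset.mem_univ _, ?_⟩
      refine Finset.sum_pos'
        (fun j _ => Finset.sum_nonneg fun a _ => hterm_nonneg a i0 j)
        ⟨j0, Finset.mem_univ _, ?_⟩
      refine Finset.sum_pos' (fun a _ => hterm_nonneg a i0 j0) ⟨a0, Finset.mem_univ _, ?_⟩
      have h0 := hterm_nonneg a0 i0 j0
      rcases h0.lt_or_eq with h0' | h0'
      · exact h0'
      · exfalso; apply hne; linarith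
    · exfalso
      push_neg at hex
      have hg : ∀ a : Fin m, ∃ g : EuclideanSpace ℝ (Fin n),
          ∀ i, u a i ∈ Submodule.span ℝ {g} := by
        intro a
        by_cases h0 : ∀ i, u a i = 0
        · exact ⟨0, fun i => by rw [h0 i]; exact Submodule.zero_mem _⟩
        · push_neg at h0
          obtain ⟨i0, hi0⟩ := h0
          exact ⟨u a i0, fun i => aux_mem_span hi0 (hex a i0 i)⟩
      choose g hgmem using hg
      have hsum_u : ∀ i, (∑ a : Fin m, u a i) = e i := by
        intro i
        ext x
        simp only [hu]
        rw [WithLp.ofLp_sum, Finset.sum_apply]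
        rw [Finset.sum_ite_eq univ (c x) (fun _ => e i x)]
        simp
      have hle : Submodule.span ℝ (Set.range e) ≤ Submodule.span ℝ (Set.range g) := by
        rw [Submodule.span_le]
        rintro _ ⟨i, rfl⟩
        rw [← hsum_u i]
        exact Submodule.sum_mem _ fun a _ =>
          Submodule.span_mono (Set.singleton_subset_iff.2 (Set.mem_range_self a)) (hgmem a i)
      have h1 : finrank ℝ (Submodule.span ℝ (Set.range e)) = n - p := by
        rw [finrank_span_eq_card he.linearIndependent, Fintype.card_fin]
      have h2 : finrank ℝ (Submodule.span ℝ (Set.range g)) ≤ m := by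
        calc finrank ℝ (Submodule.span ℝ (Set.range g)) ≤ (Set.range g).toFinset.card :=
              finrank_span_le_card _
          _ ≤ m := by
              rw [Set.toFinset_range]
              exact (Finset.card_image_le).trans (by simp)
      have h3 := Submodule.finrank_mono hle
      omega
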